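/- Let D₀ = ∫_{-1}^{1} exp(-x²/2) dx + 2·exp(-1/2), and let γ = gaussianReal 0 1 be the standard Gaussian measure on ℝ. Then for every probability measure μ on ℝ that is absolutely continuous with respect to Lebesgue measure with a density p satisfying p(x) = D₀⁻¹·exp(-x²/2) for all x ∈ (-1,1), the Kullback–Leibler divergence satisfies KL(μ | γ) > 0.019. -/

import Mathlib

open MeasureTheory ProbabilityTheory

/-- The normalization constant `D₀ = ∫_{-1}^{1} exp(-x²/2) dx + 2 exp(-1/2)`. -/
noncomputable def D₀ : ℝ := (∫ x in (-1 : ℝ)..1, Real.exp (-x ^ 2 / 2)) + 2 * Real.exp (-1 / 2)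

/-- The Kullback–Leibler divergence `KL(μ | ν) = ∫ log(dμ/dν) dμ` when `μ ≪ ν` and the
log-likelihood ratio is integrable, and `+∞` otherwise. -/
noncomputable def klDiv (μ ν : Measure ℝ) : EReal :=
  @ite _ (μ ≪ ν ∧ Integrable (llr μ ν) μ) (Classical.propDecidable _)
    ((∫ x, llr μ ν x ∂μ : ℝ) : EReal) ⊤


open Real

lemma gibbs_set_bound {μ ν : Measure ℝ} [IsProbabilityMeasure μ] [IsProbabilityMeasure ν]
    (hμν : μ ≪ ν) (hint : Integrable (llr μ ν) μ) {B : Set ℝ} (hB : MeasurableSet B)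
    (hB0 : ν B ≠ 0) :
    (μ B).toReal * Real.log ((μ B).toReal / (ν B).toReal) ≤ ∫ x in B, llr μ ν x ∂μ := by
  set f : ℝ → ℝ := fun x ↦ (μ.rnDeriv ν x).toReal with hf
  set g : ℝ → ℝ := fun t ↦ t * Real.log t with hg
  have hgf : (fun x ↦ f x • llr μ ν x) = g ∘ f := by
    funext x; simp [hf, hg, llr, smul_eq_mul, Function.comp]
  haveI : NeZero (ν.restrict B) :=
    ⟨fun h => hB0 (by rwa [Measure.restrict_eq_zero] at h)⟩
  have hfi : Integrable f (ν.restrict B) := (Measure.integrable_toReal_rnDeriv).restrict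
  have hgi : Integrable (g ∘ f) (ν.restrict B) := by
    rw [← hgf]
    exact ((MeasureTheory.integrable_rnDeriv_smul_iff hμν).mpr hint).restrict
  have hJ := Real.convexOn_mul_log.map_average_le Real.continuous_mul_log.continuousOn
    isClosed_Ici (ae_of_all _ fun x => ENNReal.toReal_nonneg) hfi hgi
  have h1 : ∫ x in B, f x ∂ν = (μ B).toReal := Measure.setIntegral_toReal_rnDeriv hμν B
  have h2 : ∫ x in B, (μ.rnDeriv ν x).toReal * Real.log (μ.rnDeriv ν x).toReal ∂ν
      = ∫ x in B, llr μ ν x ∂μ := by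
    simpa [llr, smul_eq_mul] using MeasureTheory.setIntegral_rnDeriv_smul hμν hB (f := llr μ ν)
  rw [average_eq, average_eq, measureReal_restrict_apply_univ, measureReal_def, h1, h2, smul_eq_mul, smul_eq_mul] at hJ
  set c := (μ B).toReal
  set d := (ν B).toReal with hd
  have hdpos : 0 < d := ENNReal.toReal_pos hB0 (measure_ne_top ν B)
  have : c * Real.log (c / d) = d * ((d⁻¹ * c) * Real.log (d⁻¹ * c)) := by
    rw [div_eq_inv_mul]; field_simp
  rw [this]
  calc d * ((d⁻¹ * c) * Real.log (d⁻¹ * c)) ≤ d * (d⁻¹ * ∫ x in B, llr μ ν x ∂μ) :=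
        mul_le_mul_of_nonneg_left hJ hdpos.le
    _ = ∫ x in B, llr μ ν x ∂μ := by field_simp

lemma poly_integral_eval :
    (∫ x in (-1 : ℝ)..1, (1 - x^2/2 + x^4/8 - x^6/48 + x^8/384 - x^10/3200)) = 177883/103950 ∧
    (∫ x in (-1 : ℝ)..1, (1 - x^2/2 + x^4/8 - x^6/48 + x^8/384 + x^10/3200)) = 2846317/1663200 := by
  constructor
  · rw [intervalIntegral.integral_eq_sub_of_hasDerivAt (f := fun x : ℝ =>
      x - x^3/6 + x^5/40 - x^7/336 + x^9/3456 - x^11/35200)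
      (fun x _ => by
        have h := (((((hasDerivAt_id x).sub ((hasDerivAt_pow 3 x).div_const 6)).add
          ((hasDerivAt_pow 5 x).div_const 40)).sub ((hasDerivAt_pow 7 x).div_const 336)).add
          ((hasDerivAt_pow 9 x).div_const 3456)).sub ((hasDerivAt_pow 11 x).div_const 35200)
        convert h using 1
        · funext y; simp only [Pi.add_apply, Pi.sub_apply, id_eq]
        · norm_num <;> ring)
      ((by fun_prop : Continuous _).intervalIntegrable _ _)]
    norm_num
  · rw [intervalIntegral.integral_eq_sub_of_hasDerivAt (f := fun x : ℝ =>
      x - x^3/6 + x^5/40 - x^7/336 + x^9/3456 + x^11/35200)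
      (fun x _ => by
        have h := (((((hasDerivAt_id x).sub ((hasDerivAt_pow 3 x).div_const 6)).add
          ((hasDerivAt_pow 5 x).div_const 40)).sub ((hasDerivAt_pow 7 x).div_const 336)).add
          ((hasDerivAt_pow 9 x).div_const 3456)).add ((hasDerivAt_pow 11 x).div_const 35200)
        convert h using 1
        · funext y; simp only [Pi.add_apply, Pi.sub_apply, id_eq]
        · norm_num <;> ring)
      ((by fun_prop : Continuous _).intervalIntegrable _ _)]
    norm_num


lemma exp_quad_pointwise {x : ℝ} (hx : x ∈ Set.Icc (-1 : ℝ) 1) :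
    1 - x^2/2 + x^4/8 - x^6/48 + x^8/384 - x^10/3200 ≤ Real.exp (-x^2/2) ∧
    Real.exp (-x^2/2) ≤ 1 - x^2/2 + x^4/8 - x^6/48 + x^8/384 + x^10/3200 := by
  have hx2 : x^2 ≤ 1 := by
    obtain ⟨h1, h2⟩ := hx; nlinarith
  have habs : |(-x^2/2 : ℝ)| ≤ 1 := by
    rw [abs_le]; constructor <;> nlinarith [sq_nonneg x]
  have h := Real.exp_bound habs (n := 5) (by norm_num)
  rw [abs_le] at h
  have hsum : (∑ m ∈ Finset.range 5, (-x^2/2)^m / m.factorial)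
      = 1 - x^2/2 + x^4/8 - x^6/48 + x^8/384 := by
    simp [Finset.sum_range_succ, Nat.factorial]
    ring
  have habs5 : |(-x^2/2 : ℝ)|^5 * (1/100) ≤ x^10/3200 := by
    rw [abs_div, abs_neg, abs_pow, abs_two, sq_abs]
    have : (x^2/2)^5 = x^10/32 := by ring
    nlinarith [pow_nonneg (sq_nonneg x) 5]
  have h5 : (5 : ℕ).factorial = 120 := by norm_num [Nat.factorial]
  obtain ⟨hl, hr⟩ := h
  rw [hsum] at hl hr
  norm_num [Nat.factorial] at hl hr
  constructor
  · nlinarith [hl, habs5]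
  · nlinarith [hr, habs5]


lemma I_bounds : (177883 : ℝ)/103950 ≤ (∫ x in (-1 : ℝ)..1, Real.exp (-x^2/2)) ∧
    (∫ x in (-1 : ℝ)..1, Real.exp (-x^2/2)) ≤ 2846317/1663200 := by
  have hcont : Continuous fun x : ℝ => Real.exp (-x^2/2) := by fun_prop
  obtain ⟨h1, h2⟩ := poly_integral_eval
  constructor
  · rw [← h1]
    apply intervalIntegral.integral_mono_on (by norm_num)
      ((by fun_prop : Continuous _).intervalIntegrable _ _) (hcont.intervalIntegrable _ _)
    intro x hx
    exact (exp_quad_pointwise hx).1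
  · rw [← h2]
    apply intervalIntegral.integral_mono_on (by norm_num) (hcont.intervalIntegrable _ _)
      ((by fun_prop : Continuous _).intervalIntegrable _ _)
    intro x hx
    exact (exp_quad_pointwise hx).2

lemma E_bounds : (0.60653 : ℝ) ≤ Real.exp (-1/2) ∧ Real.exp (-1/2) ≤ 0.6065307 := by
  have h := Real.exp_bound (x := -1/2) (by rw [abs_le]; constructor <;> norm_num)
    (n := 8) (by norm_num)
  rw [abs_le] at h
  obtain ⟨hl, hr⟩ := h
  have habs : |(-1 : ℝ)/2| = 1/2 := by rw [abs_div]; norm_num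
  rw [habs] at hl hr
  norm_num [Finset.sum_range_succ, Nat.factorial] at hl hr
  constructor <;> nlinarith


lemma S_bounds : (2.50662 : ℝ) ≤ Real.sqrt (2*π) ∧ Real.sqrt (2*π) ≤ 2.506629 := by
  have h2 : Real.sqrt (2*π) ^ 2 = 2*π := Real.sq_sqrt (by positivity)
  have hπl := Real.pi_gt_d6
  have hπu := Real.pi_lt_d6
  have hnn := Real.sqrt_nonneg (2*π)
  constructor <;> nlinarith


lemma exp_c1_bound : Real.exp (-0.1542) ≤ 0.857108 := by
  have h := Real.exp_bound (x := -0.1542) (by rw [abs_le]; constructor <;> norm_num)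
    (n := 4) (by norm_num)
  rw [abs_le] at h
  obtain ⟨-, hr⟩ := h
  have habs : |(-0.1542 : ℝ)| = 0.1542 := by rw [abs_of_nonpos] <;> norm_num
  rw [habs] at hr
  norm_num [Finset.sum_range_succ, Nat.factorial] at hr
  nlinarith


lemma exp_c2_bound : Real.exp (0.2678) ≤ 1.307086 := by
  have h := Real.exp_bound' (x := 0.2678) (by norm_num) (by norm_num) (n := 6) (by norm_num)
  norm_num [Finset.sum_range_succ, Nat.factorial] at h
  nlinarith


lemma final_numeric (I E S : ℝ)
    (hIl : (177883 : ℝ)/103950 ≤ I) (hIu : I ≤ 2846317/1663200)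
    (hEl : (0.60653 : ℝ) ≤ E) (hEu : E ≤ 0.6065307)
    (hSl : (2.50662 : ℝ) ≤ S) (hSu : S ≤ 2.506629) :
    (0.019 : ℝ) < I/(I+2*E) * Real.log ((I/(I+2*E))/(I/S))
      + (1 - I/(I+2*E)) * Real.log ((1 - I/(I+2*E))/(1 - I/S)) := by
  have hIpos : 0 < I := by linarith
  have hSpos : 0 < S := by linarith
  have hDpos : 0 < I + 2*E := by linarith
  set D := I + 2*E with hD
  set a := I/D with ha
  set b := I/S with hb
  have hapos : 0 < a := div_pos hIpos hDpos
  have hbpos : 0 < b := div_pos hIpos hSpos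
  -- bounds on a and b
  have haU : a ≤ 0.58522 := by
    rw [ha, div_le_iff₀ hDpos]; nlinarith
  have hbL : 0.68268 ≤ b := by
    rw [hb, le_div_iff₀ hSpos]; nlinarith
  have hbU : b ≤ 0.68274 := by
    rw [hb, div_le_iff₀ hSpos]; nlinarith
  -- a/b = S/D
  have hab : a/b = S/D := by
    rw [ha, hb]; field_simp
  have habpos : 0 < a/b := by rw [hab]; positivity
  -- log bound 1
  have hlog1 : (-0.1542 : ℝ) ≤ Real.log (a/b) := by
    rw [Real.le_log_iff_exp_le habpos, hab, le_div_iff₀ hDpos]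
    have h1 := exp_c1_bound
    have : Real.exp (-0.1542) = Real.exp (-(0.1542 : ℝ)) := by norm_num
    nlinarith [Real.exp_pos (-(0.1542:ℝ))]
  -- log bound 2
  have hqpos : 0 < (1 - a)/(1 - b) := by
    apply div_pos <;> linarith
  have hlog2 : (0.2678 : ℝ) ≤ Real.log ((1 - a)/(1 - b)) := by
    rw [Real.le_log_iff_exp_le hqpos, le_div_iff₀ (by linarith : (0:ℝ) < 1 - b)]
    nlinarith [exp_c2_bound, Real.exp_pos (0.2678:ℝ)]
  nlinarith [mul_le_mul_of_nonneg_left hlog1 hapos.le,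
    mul_le_mul_of_nonneg_left hlog2 (by linarith : (0:ℝ) ≤ 1 - a)]

/-- Every probability measure `μ` on `ℝ` with a Lebesgue density equal to
`D₀⁻¹ exp(-x²/2)` on `(-1, 1)` satisfies `KL(μ | γ) > 0.019`, where `γ` is the standard
Gaussian. Hence the forward-Euler iterates of the second counter-example stay bounded
away from the minimum of the energy. -/
theorem klDiv_lower_bound_of_density_on_interval
    (μ : Measure ℝ) [IsProbabilityMeasure μ] (p : ℝ → ENNReal)
    (hμ : μ = volume.withDensity p)
    (hp : ∀ x ∈ Set.Ioo (-1 : ℝ) 1, p x = ENNReal.ofReal (D₀⁻¹ * Real.exp (-x ^ 2 / 2))) :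
    ((0.019 : ℝ) : EReal) < klDiv μ (gaussianReal 0 1) := by
  by_cases hc : μ ≪ gaussianReal 0 1 ∧ Integrable (llr μ (gaussianReal 0 1)) μ
  case neg => rw [klDiv, if_neg hc]; exact EReal.coe_lt_top _
  obtain ⟨hac, hint⟩ := hc
  rw [klDiv, if_pos ⟨hac, hint⟩, EReal.coe_lt_coe_iff]
  set γ : Measure ℝ := gaussianReal 0 1 with hγdef
  set A : Set ℝ := Set.Ioo (-1) 1 with hAdef
  set I : ℝ := ∫ x in (-1 : ℝ)..1, Real.exp (-x ^ 2 / 2) with hIdef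
  set S : ℝ := Real.sqrt (2*π) with hSdef
  set E : ℝ := Real.exp (-1/2) with hEdef
  have hD₀ : D₀ = I + 2*E := by rw [D₀]
  obtain ⟨hIl, hIu⟩ := I_bounds
  obtain ⟨hEl, hEu⟩ := E_bounds
  obtain ⟨hSl, hSu⟩ := S_bounds
  rw [← hIdef] at hIl hIu
  have hIpos : 0 < I := by linarith
  have hSpos : 0 < S := by linarith
  have hD₀pos : 0 < D₀ := by rw [hD₀]; linarith
  set a : ℝ := I / D₀ with hadef
  set b : ℝ := I / S with hbdef
  have hapos : 0 < a := div_pos hIpos hD₀pos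
  have hbpos : 0 < b := div_pos hIpos hSpos
  have haU : a ≤ 0.6 := by rw [hadef, div_le_iff₀ hD₀pos, hD₀]; nlinarith
  have hbU : b ≤ 0.7 := by rw [hbdef, div_le_iff₀ hSpos]; nlinarith
  -- measure of A under μ
  have hIoo : ∫ x in A, Real.exp (-x ^ 2 / 2) = I := by
    rw [hIdef, intervalIntegral.integral_of_le (by norm_num : (-1:ℝ) ≤ 1),
      integral_Ioc_eq_integral_Ioo]
  have hcont : Continuous fun x : ℝ => Real.exp (-x ^ 2 / 2) := by fun_prop
  have hμA : μ A = ENNReal.ofReal a := by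
    rw [hμ, withDensity_apply _ measurableSet_Ioo,
      setLIntegral_congr_fun measurableSet_Ioo hp,
      ← ofReal_integral_eq_lintegral_ofReal (f := fun x : ℝ => D₀⁻¹ * Real.exp (-x ^ 2 / 2))
        (((continuous_const.mul hcont).integrableOn_Icc).mono_set Set.Ioo_subset_Icc_self)
        (ae_of_all _ fun x => (mul_pos (inv_pos.mpr hD₀pos) (Real.exp_pos _)).le)]
    rw [MeasureTheory.integral_const_mul, hIoo, hadef]
    rw [inv_mul_eq_div]
  -- measure of A under γ
  have hpdf : ∀ x : ℝ, gaussianPDFReal 0 1 x = S⁻¹ * Real.exp (-x ^ 2 / 2) := by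
    intro x
    rw [gaussianPDFReal, hSdef]
    norm_num
  have hγA : γ A = ENNReal.ofReal b := by
    rw [hγdef, gaussianReal_apply_eq_integral 0 one_ne_zero,
      setIntegral_congr_fun measurableSet_Ioo (fun x _ => hpdf x),
      MeasureTheory.integral_const_mul, hIoo, hbdef, inv_mul_eq_div]
  -- complements
  have hμAc : μ Aᶜ = ENNReal.ofReal (1 - a) := by
    rw [measure_compl measurableSet_Ioo (measure_ne_top _ _), measure_univ, hμA,
      ← ENNReal.ofReal_one, ← ENNReal.ofReal_sub _ hapos.le]
  have hγAc : γ Aᶜ = ENNReal.ofReal (1 - b) := by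
    rw [measure_compl measurableSet_Ioo (measure_ne_top _ _), measure_univ, hγA,
      ← ENNReal.ofReal_one, ← ENNReal.ofReal_sub _ hbpos.le]
  -- toReal values
  have htμA : (μ A).toReal = a := by rw [hμA, ENNReal.toReal_ofReal hapos.le]
  have htγA : (γ A).toReal = b := by rw [hγA, ENNReal.toReal_ofReal hbpos.le]
  have htμAc : (μ Aᶜ).toReal = 1 - a := by
    rw [hμAc, ENNReal.toReal_ofReal (by linarith)]
  have htγAc : (γ Aᶜ).toReal = 1 - b := by
    rw [hγAc, ENNReal.toReal_ofReal (by linarith)]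
  -- Jensen bounds
  have hγA0 : γ A ≠ 0 := by rw [hγA]; simp [ENNReal.ofReal_eq_zero]; linarith
  have hγAc0 : γ Aᶜ ≠ 0 := by rw [hγAc]; simp [ENNReal.ofReal_eq_zero]; linarith
  have hJ1 := gibbs_set_bound hac hint measurableSet_Ioo hγA0
  have hJ2 := gibbs_set_bound hac hint measurableSet_Ioo.compl hγAc0
  rw [htμA, htγA] at hJ1
  rw [htμAc, htγAc] at hJ2
  have htotal : ∫ x, llr μ γ x ∂μ = (∫ x in A, llr μ γ x ∂μ) + ∫ x in Aᶜ, llr μ γ x ∂μ :=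
    (integral_add_compl measurableSet_Ioo hint).symm
  have hkey := final_numeric I E S hIl hIu hEl hEu hSl hSu
  rw [← hD₀, ← hadef] at hkey
  have hb' : I / S = b := hbdef.symm
  rw [hb'] at hkey
  rw [htotal]
  linarith
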